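/- Let n ≥ 1 and let V be a real vector space of dimension 2n. Let ω be a nonzero alternating n-linear form on V, and let K = {v ∈ V : ω(v, w₁, …, w_{n−1}) = 0 for all w₁, …, w_{n−1} ∈ V} be its kernel, which is a linear subspace of V. Assume dim K = n. Then for every linearly independent family w₁, …, wₙ ∈ V, one has ω(w₁, …, wₙ) = 0 if and only if the span of {w₁, …, wₙ} intersects K nontrivially, i.e. span{w₁, …, wₙ} ∩ K ≠ {0}. -/

import Mathlib

/-- Let `V` be a real vector space of dimension `2n` (with `n = m + 1 ≥ 1`),
`ω` a nonzero alternating `n`-linear form on `V`, and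
`K = {v : ∀ w₁ … w_{n-1}, ω (v, w₁, …, w_{n-1}) = 0}` its kernel, assumed of dimension `n`.
Then for every linearly independent family `w₁, …, wₙ` one has `ω (w₁, …, wₙ) = 0` iff
`span {w₁, …, wₙ} ∩ K ≠ {0}`. -/
theorem stmt2 (m : ℕ) (V : Type*) [AddCommGroup V] [Module ℝ V]
    [FiniteDimensional ℝ V] (hdim : Module.finrank ℝ V = 2 * (m + 1))
    (ω : V [⋀^Fin (m + 1)]→ₗ[ℝ] ℝ) (hω : ω ≠ 0)
    (K : Submodule ℝ V)
    (hK : ∀ v : V, v ∈ K ↔ ∀ w : Fin m → V, ω (Fin.cons v w) = 0)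
    (hKdim : Module.finrank ℝ K = m + 1)
    (w : Fin (m + 1) → V) (hw : LinearIndependent ℝ w) :
    ω w = 0 ↔ Submodule.span ℝ (Set.range w) ⊓ K ≠ ⊥ := by
  classical
  -- ω vanishes whenever the first argument lies in K
  have h0 : ∀ h : Fin (m + 1) → V, h 0 ∈ K → ω h = 0 := by
    intro h hh
    have := (hK (h 0)).mp hh (Fin.tail h)
    rwa [Fin.cons_self_tail] at this
  -- ω vanishes whenever some argument lies in K
  have hzero : ∀ (g : Fin (m + 1) → V) (i : Fin (m + 1)), g i ∈ K → ω g = 0 := by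
    intro g i hi
    by_cases h : i = 0
    · exact h0 g (h ▸ hi)
    · have hswap := ω.map_swap (v := g) (Ne.symm h : (0 : Fin (m+1)) ≠ i)
      have : ω (g ∘ Equiv.swap 0 i) = 0 := by
        apply h0
        simpa [Equiv.swap_apply_left] using hi
      rw [this] at hswap
      linarith
  constructor
  · -- hard direction
    intro hw0
    by_contra hbot
    -- span w ⊔ K = ⊤
    have hspan : Module.finrank ℝ (Submodule.span ℝ (Set.range w)) = m + 1 := by
      rw [finrank_span_eq_card hw, Fintype.card_fin]
    have hsup : Submodule.span ℝ (Set.range w) ⊔ K = ⊤ := by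
      apply Submodule.eq_top_of_finrank_eq
      have := Submodule.finrank_sup_add_finrank_inf_eq (Submodule.span ℝ (Set.range w)) K
      rw [hbot, finrank_bot, add_zero, hspan, hKdim] at this
      omega
    -- ω vanishes on tuples from span w
    set W := Submodule.span ℝ (Set.range w) with hW
    let b : Module.Basis (Fin (m + 1)) ℝ W := Module.Basis.span hw
    let ω' : W [⋀^Fin (m + 1)]→ₗ[ℝ] ℝ := ω.compLinearMap W.subtype
    have hω'b : ω' (fun i => b i) = 0 := by
      have hc : ω' (fun i => b i) = ω w := by
        simp only [ω', AlternatingMap.compLinearMap_apply]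
        congr 1
        funext i
        exact congrArg Subtype.val (Module.Basis.span_apply hw i)
      rw [hc, hw0]
    have hω' : ω' = 0 := by
      rw [ω'.eq_smul_basis_det b, show ω' b = 0 from hω'b, zero_smul]
    have hWzero : ∀ s : Fin (m + 1) → V, (∀ i, s i ∈ W) → ω s = 0 := by
      intro s hs
      have : ω s = ω' (fun i => ⟨s i, hs i⟩) := by
        simp [ω', AlternatingMap.compLinearMap_apply]
      rw [this, hω']
      rfl
    -- now ω = 0
    apply hω
    ext g
    have hdecomp : ∀ i, ∃ s ∈ W, ∃ k ∈ K, g i = s + k := by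
      intro i
      have : g i ∈ W ⊔ K := hsup ▸ Submodule.mem_top
      obtain ⟨s, hs, k, hk, h⟩ := Submodule.mem_sup.mp this
      exact ⟨s, hs, k, hk, h.symm⟩
    choose s hs k hk hg using hdecomp
    rw [AlternatingMap.zero_apply]
    have hgsk : ω g = ω (s + k) := by
      congr 1; funext i; exact hg i
    rw [hgsk]
    have expand : ω (s + k) = ∑ t : Finset (Fin (m+1)), ω (t.piecewise s k) :=
      ω.toMultilinearMap.map_add_univ s k
    rw [expand]
    apply Finset.sum_eq_zero
    intro t _
    by_cases ht : t = Finset.univ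
    · subst ht
      rw [Finset.piecewise_univ]
      exact hWzero s hs
    · obtain ⟨i, hi⟩ : ∃ i, i ∉ t := by
        by_contra h
        push_neg at h
        exact ht (Finset.eq_univ_iff_forall.mpr h)
      apply hzero _ i
      rw [Finset.piecewise_eq_of_notMem _ _ _ hi]
      exact hk i
  · -- easy direction
    intro hne
    obtain ⟨v, hv, hv0⟩ := Submodule.exists_mem_ne_zero_of_ne_bot hne
    obtain ⟨hvW, hvK⟩ := hv
    obtain ⟨c, hc⟩ := (Submodule.mem_span_range_iff_exists_fun ℝ).mp hvW
    obtain ⟨j, hj⟩ : ∃ j, c j ≠ 0 := by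
      by_contra h
      push_neg at h
      apply hv0
      rw [← hc]
      simp [h]
    have h1 : ω (Function.update w j v) = 0 :=
      hzero _ j (by rw [Function.update_self]; exact hvK)
    have h2 : ω (Function.update w j v) = c j * ω w := by
      rw [← hc]
      have e1 : ω (Function.update w j (∑ i, c i • w i))
          = ∑ i, ω (Function.update w j (c i • w i)) :=
        ω.toMultilinearMap.map_update_sum Finset.univ j (fun i => c i • w i) w
      rw [e1, Finset.sum_eq_single j]
      · rw [ω.map_update_smul]
        simp [Function.update_eq_self, smul_eq_mul]
      · intro i _ hij
        rw [ω.map_update_smul]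
        have : ω (Function.update w j (w i)) = 0 :=
          ω.map_eq_zero_of_eq _ (by simp [Function.update_of_ne hij, Function.update_self]) hij
        rw [this, smul_zero]
      · intro h; exact absurd (Finset.mem_univ j) h
    rw [h1] at h2
    exact ((mul_eq_zero.mp h2.symm).resolve_left hj).symm ▸ rfl
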